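/- arXiv:2503.23970 — 3 statements merged into one kernel-verified Lean document; each statement's English description precedes it below -/
import Mathlib

section
/- Suppose 0 < h < 1/4 and let x₃ = (1 − √(1 − 4h))/2. Then the Fréchet derivative of F at E₃ = (x₃, 0) is the linear map given by the matrix [[1 − 2x₃, −q·x₃], [0, −s·m]], and its eigenvalues 1 − 2x₃ and −s·m satisfy 1 − 2x₃ > 0 and −s·m < 0; in particular the determinant of this matrix is strictly negative. -/
/-- The predator–prey vector field
    `F(x,y) = (x(1-x) - q x y - h, s y (1 - y/x)(y - m))`. -/
noncomputable def F (q s h m : ℝ) (p : ℝ × ℝ) : ℝ × ℝ :=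
  (p.1 * (1 - p.1) - q * p.1 * p.2 - h, s * p.2 * (1 - p.2 / p.1) * (p.2 - m))

/-- The continuous linear map `ℝ² → ℝ²` with matrix `[[a, b], [c, d]]`. -/
noncomputable def clm (a b c d : ℝ) : (ℝ × ℝ) →L[ℝ] (ℝ × ℝ) :=
  (a • ContinuousLinearMap.fst ℝ ℝ ℝ + b • ContinuousLinearMap.snd ℝ ℝ ℝ).prod
    (c • ContinuousLinearMap.fst ℝ ℝ ℝ + d • ContinuousLinearMap.snd ℝ ℝ ℝ)

lemma mem_spec_diag1 (a b d : ℝ) :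
    a ∈ spectrum ℝ (!![a, b; 0, d] : Matrix (Fin 2) (Fin 2) ℝ) := by
  rw [spectrum.mem_iff, Matrix.isUnit_iff_isUnit_det]
  simp [Matrix.det_fin_two, Matrix.algebraMap_matrix_apply]

lemma mem_spec_diag2 (a b d : ℝ) :
    d ∈ spectrum ℝ (!![a, b; 0, d] : Matrix (Fin 2) (Fin 2) ℝ) := by
  rw [spectrum.mem_iff, Matrix.isUnit_iff_isUnit_det]
  simp [Matrix.det_fin_two, Matrix.algebraMap_matrix_apply]

/-- If `0 < h < 1/4` and `x₃ = (1 - √(1-4h))/2`, the Fréchet derivative of `F` at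
`E₃ = (x₃, 0)` is the linear map with matrix `[[1 - 2x₃, -q x₃], [0, -s m]]`, its
eigenvalues satisfy `1 - 2x₃ > 0` and `-s m < 0`, and its determinant is negative. -/
theorem stmt7 (q s h m x3 : ℝ) (hq : 0 < q) (hs : 0 < s) (hh : 0 < h)
    (hm0 : 0 < m) (hm1 : m < 1) (hh4 : h < 1/4)
    (hx3 : x3 = (1 - Real.sqrt (1 - 4*h))/2) :
    HasFDerivAt (F q s h m) (clm (1 - 2*x3) (-q*x3) 0 (-s*m)) ((x3, 0) : ℝ × ℝ) ∧
    (1 - 2*x3) ∈ spectrum ℝ (!![1 - 2*x3, -q*x3; 0, -s*m] : Matrix (Fin 2) (Fin 2) ℝ) ∧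
    (-s*m) ∈ spectrum ℝ (!![1 - 2*x3, -q*x3; 0, -s*m] : Matrix (Fin 2) (Fin 2) ℝ) ∧
    0 < 1 - 2*x3 ∧ -s*m < 0 ∧
    (!![1 - 2*x3, -q*x3; 0, -s*m] : Matrix (Fin 2) (Fin 2) ℝ).det < 0 := by
  have h4 : (0:ℝ) < 1 - 4*h := by linarith
  have hsq1 : Real.sqrt (1 - 4*h) < 1 := by
    have : Real.sqrt (1-4*h) < Real.sqrt 1 := Real.sqrt_lt_sqrt h4.le (by linarith)
    simpa using this
  have hsq0 : 0 < Real.sqrt (1 - 4*h) := Real.sqrt_pos.mpr h4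
  have hx3pos : 0 < x3 := by rw [hx3]; linarith
  have hxne : x3 ≠ 0 := ne_of_gt hx3pos
  have hpos : 0 < 1 - 2*x3 := by rw [hx3]; linarith
  have hneg : -s*m < 0 := by nlinarith
  have fst' := hasFDerivAt_fst (𝕜 := ℝ) (p := ((x3,0) : ℝ × ℝ))
  have snd' := hasFDerivAt_snd (𝕜 := ℝ) (p := ((x3,0) : ℝ × ℝ))
  have d1 : HasFDerivAt (fun p : ℝ × ℝ => p.1 * (1 - p.1) - q * p.1 * p.2 - h)
      ((1 - 2*x3) • ContinuousLinearMap.fst ℝ ℝ ℝ + (-q*x3) • ContinuousLinearMap.snd ℝ ℝ ℝ)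
      ((x3, 0) : ℝ × ℝ) := by
    have C := ((fst'.mul ((hasFDerivAt_const (1:ℝ) ((x3,0) : ℝ × ℝ)).sub fst')).sub
      ((fst'.const_mul q).mul snd')).sub_const h
    refine C.congr_fderiv ?_
    apply ContinuousLinearMap.ext
    rintro ⟨v1, v2⟩
    simp
    ring
  have d2 : HasFDerivAt (fun p : ℝ × ℝ => s * p.2 * (1 - p.2 / p.1) * (p.2 - m))
      ((0:ℝ) • ContinuousLinearMap.fst ℝ ℝ ℝ + (-s*m) • ContinuousLinearMap.snd ℝ ℝ ℝ)
      ((x3, 0) : ℝ × ℝ) := by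
    simp only [div_eq_mul_inv]
    have hinv := (hasFDerivAt_inv' (𝕜 := ℝ) (x := x3) hxne).comp ((x3,0) : ℝ × ℝ) fst'
    have D := (((snd'.const_mul s).mul
      ((hasFDerivAt_const (1:ℝ) ((x3,0) : ℝ × ℝ)).sub (snd'.mul hinv))).mul
      (snd'.sub_const m))
    refine D.congr_fderiv ?_
    apply ContinuousLinearMap.ext
    rintro ⟨v1, v2⟩
    simp
    ring
  refine ⟨d1.prodMk d2, mem_spec_diag1 _ _ _, mem_spec_diag2 _ _ _, hpos, hneg, ?_⟩
  rw [Matrix.det_fin_two_of]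
  nlinarith
end

section
/- Let A = 1 − q·m, Δ₁ = A² − 4h, h₁ = m − (q+1)·m², and suppose A > 0 and Δ₁ > 0. If m > A/2 and h = h₁, then x₅ := (A + √Δ₁)/2 = m, so E₅ = (m, m); consequently the Jacobian matrix of F at E₅ has eigenvalues 1 − 2m − q·m < 0 and 0. -/
lemma mem_spec_aux (a b lam : ℝ) (hl : lam = a ∨ lam = 0) :
    lam ∈ spectrum ℝ (!![a, b; 0, 0] : Matrix (Fin 2) (Fin 2) ℝ) := by
  rw [spectrum.mem_iff]
  intro hu
  rw [Matrix.isUnit_iff_isUnit_det] at hu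
  have hdet : ((algebraMap ℝ (Matrix (Fin 2) (Fin 2) ℝ)) lam
      - !![a, b; 0, 0]).det = (lam - a) * lam := by
    simp [Matrix.det_fin_two, Matrix.algebraMap_eq_diagonal]
  rw [hdet] at hu
  rcases hl with h | h <;> simp [h] at hu

lemma deriv_aux (q s h m : ℝ) (hm0 : 0 < m) :
    HasFDerivAt (F q s h m) (clm (1 - 2*m - q*m) (-q*m) 0 0) ((m, m) : ℝ × ℝ) := by
  have hfst : HasFDerivAt (fun p : ℝ × ℝ => p.1)
      (ContinuousLinearMap.fst ℝ ℝ ℝ) ((m, m) : ℝ × ℝ) := hasFDerivAt_fst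
  have hsnd : HasFDerivAt (fun p : ℝ × ℝ => p.2)
      (ContinuousLinearMap.snd ℝ ℝ ℝ) ((m, m) : ℝ × ℝ) := hasFDerivAt_snd
  have h1 : HasFDerivAt (fun p : ℝ × ℝ => p.1 * (1 - p.1) - q * p.1 * p.2 - h)
      ((1 - 2*m - q*m) • ContinuousLinearMap.fst ℝ ℝ ℝ
        + (-q*m) • ContinuousLinearMap.snd ℝ ℝ ℝ) ((m, m) : ℝ × ℝ) := by
    have := ((hfst.mul ((hasFDerivAt_const (1:ℝ) _).sub hfst)).sub
      ((hfst.const_mul q).mul hsnd)).sub_const h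
    refine this.congr_fderiv ?_
    refine ContinuousLinearMap.ext fun v => ?_
    simp
    ring
  have h2 : HasFDerivAt (fun p : ℝ × ℝ => s * p.2 * (1 - p.2 / p.1) * (p.2 - m))
      ((0:ℝ) • ContinuousLinearMap.fst ℝ ℝ ℝ
        + (0:ℝ) • ContinuousLinearMap.snd ℝ ℝ ℝ) ((m, m) : ℝ × ℝ) := by
    have hdiv : HasFDerivAt (fun p : ℝ × ℝ => p.2 / p.1)
        ((1/m) • ContinuousLinearMap.snd ℝ ℝ ℝ
          - (m / m^2) • ContinuousLinearMap.fst ℝ ℝ ℝ) ((m, m) : ℝ × ℝ) := by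
      have hinv : HasFDerivAt (fun p : ℝ × ℝ => (p.1)⁻¹)
          (((1 : ℝ →L[ℝ] ℝ).smulRight (-(m^2)⁻¹)).comp (ContinuousLinearMap.fst ℝ ℝ ℝ))
          ((m, m) : ℝ × ℝ) :=
        (hasDerivAt_inv (ne_of_gt hm0)).hasFDerivAt.comp ((m, m) : ℝ × ℝ) hfst
      have key := hsnd.mul hinv
      have heq : (fun p : ℝ × ℝ => p.2 / p.1) = fun p : ℝ × ℝ => p.2 * (p.1)⁻¹ := by
        funext p; rw [div_eq_mul_inv]
      rw [heq]
      refine key.congr_fderiv ?_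
      refine ContinuousLinearMap.ext fun v => ?_
      simp [smul_smul]
      ring
    have := ((hsnd.const_mul s).mul
      ((hasFDerivAt_const (1:ℝ) _).sub hdiv)).mul (hsnd.sub_const m)
    refine this.congr_fderiv ?_
    refine ContinuousLinearMap.ext fun v => ?_
    have hm : m ≠ 0 := ne_of_gt hm0
    simp
    field_simp
    simp
  exact HasFDerivAt.prodMk h1 h2

/-- With `A = 1 - q m > 0`, `Δ₁ = A² - 4h > 0`, `h₁ = m - (q+1)m²`: if `m > A/2` and
`h = h₁` then `x₅ := (A + √Δ₁)/2 = m`, so `E₅ = (m, m)`; the Jacobian of `F` at `E₅` has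
eigenvalues `1 - 2m - q m < 0` and `0`. -/
theorem stmt11 (q s h m x5 : ℝ) (hq : 0 < q) (hs : 0 < s) (hh : 0 < h)
    (hm0 : 0 < m) (hm1 : m < 1)
    (hA : 0 < 1 - q*m) (hΔ : 0 < (1 - q*m)^2 - 4*h)
    (hx5 : x5 = (1 - q*m + Real.sqrt ((1 - q*m)^2 - 4*h))/2)
    (hcond : (1 - q*m)/2 < m ∧ h = m - (q+1)*m^2) :
    x5 = m ∧
    HasFDerivAt (F q s h m) (clm (1 - 2*m - q*m) (-q*m) 0 0) ((m, m) : ℝ × ℝ) ∧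
    (1 - 2*m - q*m) ∈ spectrum ℝ
      (!![1 - 2*m - q*m, -q*m; 0, 0] : Matrix (Fin 2) (Fin 2) ℝ) ∧
    (0 : ℝ) ∈ spectrum ℝ
      (!![1 - 2*m - q*m, -q*m; 0, 0] : Matrix (Fin 2) (Fin 2) ℝ) ∧
    1 - 2*m - q*m < 0 := by
  obtain ⟨hc1, hc2⟩ := hcond
  have hpos : 0 ≤ 2*m + q*m - 1 := by linarith
  have hsq : (1 - q*m)^2 - 4*h = (2*m + q*m - 1)^2 := by rw [hc2]; ring
  have hx : x5 = m := by
    rw [hx5, hsq, Real.sqrt_sq hpos]; ring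
  refine ⟨hx, deriv_aux q s h m hm0, mem_spec_aux _ _ _ (Or.inl rfl),
    mem_spec_aux _ _ _ (Or.inr rfl), by linarith⟩
end

section
/- Let A = 1 − q·m, Δ₁ = A² − 4h, h₁ = m − (q+1)·m², and suppose A > 0 and Δ₁ > 0; let x₆ = (A − √Δ₁)/2. If m ≥ A/2, or if m < A/2 and h < h₁, then x₆ < m; consequently the Jacobian matrix of F at E₆ = (x₆, m), which equals [[1 − 2x₆ − q·m, −q·x₆], [0, s·m·(1 − m/x₆)]], has eigenvalues 1 − 2x₆ − q·m > 0 and s·m·(1 − m/x₆) < 0, i.e. one positive and one negative real eigenvalue. -/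
lemma mem_spec_tri_left (a b d : ℝ) :
    a ∈ spectrum ℝ (!![a,b;0,d] : Matrix (Fin 2) (Fin 2) ℝ) := by
  rw [spectrum.mem_iff]
  intro hu
  have h := (Matrix.isUnit_iff_isUnit_det _).mp hu
  rw [Matrix.det_fin_two] at h
  simp [Matrix.algebraMap_eq_diagonal, Matrix.sub_apply] at h

lemma mem_spec_tri_right (a b d : ℝ) :
    d ∈ spectrum ℝ (!![a,b;0,d] : Matrix (Fin 2) (Fin 2) ℝ) := by
  rw [spectrum.mem_iff]
  intro hu
  have h := (Matrix.isUnit_iff_isUnit_det _).mp hu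
  rw [Matrix.det_fin_two] at h
  simp [Matrix.algebraMap_eq_diagonal, Matrix.sub_apply] at h

set_option maxHeartbeats 1000000 in
/-- With `A = 1 - q m > 0`, `Δ₁ = A² - 4h > 0`, `h₁ = m - (q+1)m²`, and
`x₆ = (A - √Δ₁)/2`: if `m ≥ A/2`, or `m < A/2` and `h < h₁`, then `x₆ < m`; the Jacobian
of `F` at `E₆ = (x₆, m)` is `[[1 - 2x₆ - q m, -q x₆], [0, s m (1 - m/x₆)]]` and has one
positive eigenvalue `1 - 2x₆ - q m` and one negative eigenvalue `s m (1 - m/x₆)`. -/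
theorem stmt12 (q s h m x6 : ℝ) (hq : 0 < q) (hs : 0 < s) (hh : 0 < h)
    (hm0 : 0 < m) (hm1 : m < 1)
    (hA : 0 < 1 - q*m) (hΔ : 0 < (1 - q*m)^2 - 4*h)
    (hx6 : x6 = (1 - q*m - Real.sqrt ((1 - q*m)^2 - 4*h))/2)
    (hcond : (1 - q*m)/2 ≤ m ∨ (m < (1 - q*m)/2 ∧ h < m - (q+1)*m^2)) :
    x6 < m ∧
    HasFDerivAt (F q s h m)
      (clm (1 - 2*x6 - q*m) (-q*x6) 0 (s*m*(1 - m/x6))) ((x6, m) : ℝ × ℝ) ∧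
    (1 - 2*x6 - q*m) ∈ spectrum ℝ
      (!![1 - 2*x6 - q*m, -q*x6; 0, s*m*(1 - m/x6)] : Matrix (Fin 2) (Fin 2) ℝ) ∧
    (s*m*(1 - m/x6)) ∈ spectrum ℝ
      (!![1 - 2*x6 - q*m, -q*x6; 0, s*m*(1 - m/x6)] : Matrix (Fin 2) (Fin 2) ℝ) ∧
    0 < 1 - 2*x6 - q*m ∧ s*m*(1 - m/x6) < 0 := by
  set D := Real.sqrt ((1 - q*m)^2 - 4*h) with hD
  have hDpos : 0 < D := Real.sqrt_pos.mpr hΔ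
  have hDsq : D^2 = (1 - q*m)^2 - 4*h := Real.sq_sqrt hΔ.le
  have hDlt : D < 1 - q*m := by
    have := Real.sqrt_lt_sqrt (by linarith) (show (1 - q*m)^2 - 4*h < (1-q*m)^2 by linarith)
    rwa [Real.sqrt_sq hA.le] at this
  have hx6pos : 0 < x6 := by rw [hx6]; linarith
  have hx6ne : x6 ≠ 0 := ne_of_gt hx6pos
  have hx6m : x6 < m := by
    rcases hcond with h1 | ⟨h1, h2⟩
    · rw [hx6]; linarith
    · -- need (1 - q*m - D)/2 < m, i.e. 1 - q*m - 2m < D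
      have hlt : 1 - q*m - 2*m < D := by
        nlinarith [hDsq, hDpos, sq_nonneg (1 - q*m - 2*m - D)]
      rw [hx6]; linarith
  have heig1 : 0 < 1 - 2*x6 - q*m := by rw [hx6]; linarith
  have heig2 : s*m*(1 - m/x6) < 0 := by
    have : 1 < m / x6 := (one_lt_div hx6pos).mpr hx6m
    have h1 : 1 - m/x6 < 0 := by linarith
    have := mul_pos hs hm0
    nlinarith
  refine ⟨hx6m, ?_, mem_spec_tri_left _ _ _, mem_spec_tri_right _ _ _, heig1, heig2⟩
  have hf1 : HasFDerivAt (fun p : ℝ×ℝ => p.1*(1-p.1) - q*p.1*p.2 - h)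
      ((1-2*x6-q*m) • ContinuousLinearMap.fst ℝ ℝ ℝ +
        (-q*x6) • ContinuousLinearMap.snd ℝ ℝ ℝ) ((x6, m) : ℝ × ℝ) := by
    have h1 := (((hasFDerivAt_fst (𝕜 := ℝ) (p := ((x6,m):ℝ×ℝ))).mul
        ((hasFDerivAt_const (1:ℝ) _).sub hasFDerivAt_fst)).sub
        (((hasFDerivAt_const q _).mul hasFDerivAt_fst).mul hasFDerivAt_snd)).sub
        (hasFDerivAt_const h _)
    refine h1.congr_fderiv ?_
    ext v <;> simp <;> ring
  have hf2 : HasFDerivAt (fun p : ℝ×ℝ => s * p.2 * (1 - p.2/p.1) * (p.2 - m))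
      ((0:ℝ) • ContinuousLinearMap.fst ℝ ℝ ℝ +
        (s*m*(1 - m/x6)) • ContinuousLinearMap.snd ℝ ℝ ℝ) ((x6, m) : ℝ × ℝ) := by
    simp only [div_eq_mul_inv]
    have hinv : HasFDerivAt (fun p : ℝ×ℝ => (p.1)⁻¹)
        ((ContinuousLinearMap.smulRight (1 : ℝ →L[ℝ] ℝ) (-(x6 ^ 2)⁻¹)).comp
          (ContinuousLinearMap.fst ℝ ℝ ℝ)) ((x6,m) : ℝ×ℝ) :=
      (hasFDerivAt_inv hx6ne).comp _ hasFDerivAt_fst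
    have h2 := ((((hasFDerivAt_const s ((x6,m):ℝ×ℝ)).mul hasFDerivAt_snd).mul
        ((hasFDerivAt_const (1:ℝ) _).sub (hasFDerivAt_snd.mul hinv))).mul
        (hasFDerivAt_snd.sub (hasFDerivAt_const m _)))
    refine h2.congr_fderiv ?_
    ext v <;> simp
  exact hf1.prodMk hf2
end
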